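/- Let S and A be finite nonempty sets. The function W̄(ρ) = (1/2)·∑_{s,a} ρ(s,a)·(1 − ρ(s,a)/(∑_{a'} ρ(s,a'))) (with the convention that the ratio is 0 when ∑_{a'} ρ(s,a') = 0) is concave on the convex set {ρ : S × A → ℝ | ρ(s,a) ≥ 0 for all (s,a)}: for all nonnegative ρ₁, ρ₂ and all λ₁, λ₂ ≥ 0 with λ₁ + λ₂ = 1, W̄(λ₁ρ₁ + λ₂ρ₂) ≥ λ₁·W̄(ρ₁) + λ₂·W̄(ρ₂). (Theorem 3 of the paper.) -/

import Mathlib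

open Finset

/-- Causal Tsallis entropy of a state-action visitation measure
(the ratio is `0` when the denominator is `0`, by Lean's division convention). -/
noncomputable def Wbar {S A : Type*} [Fintype S] [Fintype A] (ρ : S → A → ℝ) : ℝ :=
  (1 / 2) * ∑ s, ∑ a, ρ s a * (1 - ρ s a / ∑ a', ρ s a')

/-- Key pointwise inequality: convexity of quadratic-over-linear. -/
lemma key_ineq (lam1 lam2 x1 x2 y1 y2 : ℝ) (hl1 : 0 ≤ lam1) (hl2 : 0 ≤ lam2)
    (hx1 : 0 ≤ x1) (hx2 : 0 ≤ x2) (hxy1 : x1 ≤ y1) (hxy2 : x2 ≤ y2) :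
    (lam1 * x1 + lam2 * x2) ^ 2 / (lam1 * y1 + lam2 * y2)
      ≤ lam1 * (x1 ^ 2 / y1) + lam2 * (x2 ^ 2 / y2) := by
  have hy1 : 0 ≤ y1 := hx1.trans hxy1
  have hy2 : 0 ≤ y2 := hx2.trans hxy2
  rcases eq_or_lt_of_le (show (0:ℝ) ≤ lam1 * y1 + lam2 * y2 by positivity) with hy | hy
  · -- denominator is zero: lam1*x1 = lam2*x2 = 0
    have h1 : lam1 * y1 = 0 := by nlinarith [mul_nonneg hl1 hy1, mul_nonneg hl2 hy2]
    have h2 : lam2 * y2 = 0 := by nlinarith [mul_nonneg hl1 hy1, mul_nonneg hl2 hy2]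
    have hx1' : lam1 * x1 = 0 := le_antisymm (by nlinarith [mul_le_mul_of_nonneg_left hxy1 hl1]) (mul_nonneg hl1 hx1)
    have hx2' : lam2 * x2 = 0 := le_antisymm (by nlinarith [mul_le_mul_of_nonneg_left hxy2 hl2]) (mul_nonneg hl2 hx2)
    rw [hx1', hx2']
    simp
    positivity
  · -- denominator positive
    rcases eq_or_lt_of_le hy1 with hy1' | hy1'
    · -- y1 = 0, so x1 = 0
      have hx1' : x1 = 0 := le_antisymm (hxy1.trans hy1'.ge) hx1
      have hl2' : 0 < lam2 * y2 := by
        rcases eq_or_lt_of_le (mul_nonneg hl2 hy2) with h | h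
        · exfalso; nlinarith
        · exact h
      have hlam2 : 0 < lam2 := by
        rcases hl2.eq_or_lt with h | h
        · exfalso; rw [← h] at hl2'; simp at hl2'
        · exact h
      have hy2' : 0 < y2 := by nlinarith
      rw [hx1', ← hy1']
      rw [mul_zero, zero_add, zero_add]
      have : (lam2 * x2) ^ 2 / (lam2 * y2) = lam2 * (x2 ^ 2 / y2) := by
        field_simp
      rw [this]
      simp [div_nonneg (sq_nonneg x1) hy1]
    · rcases eq_or_lt_of_le hy2 with hy2' | hy2'
      · -- y2 = 0, so x2 = 0
        have hx2' : x2 = 0 := le_antisymm (hxy2.trans hy2'.ge) hx2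
        rw [hx2', ← hy2']
        rw [mul_zero, add_zero, add_zero]
        have hlam1 : 0 < lam1 := by
          rcases hl1.eq_or_lt with h | h
          · exfalso
            rw [← h] at hy
            simp at hy
            nlinarith
          · exact h
        have : (lam1 * x1) ^ 2 / (lam1 * y1) = lam1 * (x1 ^ 2 / y1) := by
          field_simp
        rw [this]
        simp [div_nonneg (sq_nonneg x2) hy2]
      · -- both y1, y2 > 0
        rw [← sub_nonneg]
        have h : lam1 * (x1 ^ 2 / y1) + lam2 * (x2 ^ 2 / y2)
            - (lam1 * x1 + lam2 * x2) ^ 2 / (lam1 * y1 + lam2 * y2)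
            = lam1 * lam2 * (x1 * y2 - x2 * y1) ^ 2 / (y1 * y2 * (lam1 * y1 + lam2 * y2)) := by
          field_simp
          ring
        rw [h]
        positivity

theorem stmt2 {S A : Type*} [Fintype S] [Fintype A] [Nonempty S] [Nonempty A]
    (ρ₁ ρ₂ : S → A → ℝ) (h1 : ∀ s a, 0 ≤ ρ₁ s a) (h2 : ∀ s a, 0 ≤ ρ₂ s a)
    (lam1 lam2 : ℝ) (hl1 : 0 ≤ lam1) (hl2 : 0 ≤ lam2) (hsum : lam1 + lam2 = 1) :
    lam1 * Wbar ρ₁ + lam2 * Wbar ρ₂ ≤ Wbar (fun s a => lam1 * ρ₁ s a + lam2 * ρ₂ s a) := by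
  simp only [Wbar]
  rw [show lam1 * (1/2 * ∑ s, ∑ a, ρ₁ s a * (1 - ρ₁ s a / ∑ a', ρ₁ s a'))
      + lam2 * (1/2 * ∑ s, ∑ a, ρ₂ s a * (1 - ρ₂ s a / ∑ a', ρ₂ s a'))
      = 1/2 * (lam1 * ∑ s, ∑ a, ρ₁ s a * (1 - ρ₁ s a / ∑ a', ρ₁ s a')
          + lam2 * ∑ s, ∑ a, ρ₂ s a * (1 - ρ₂ s a / ∑ a', ρ₂ s a')) by ring]
  apply mul_le_mul_of_nonneg_left _ (by norm_num : (0:ℝ) ≤ 1/2)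
  rw [Finset.mul_sum, Finset.mul_sum, ← Finset.sum_add_distrib]
  apply Finset.sum_le_sum
  intro s _
  rw [Finset.mul_sum, Finset.mul_sum, ← Finset.sum_add_distrib]
  apply Finset.sum_le_sum
  intro a _
  have hx1 := h1 s a
  have hx2 := h2 s a
  have hxy1 : ρ₁ s a ≤ ∑ a', ρ₁ s a' :=
    Finset.single_le_sum (fun a' _ => h1 s a') (Finset.mem_univ a)
  have hxy2 : ρ₂ s a ≤ ∑ a', ρ₂ s a' :=
    Finset.single_le_sum (fun a' _ => h2 s a') (Finset.mem_univ a)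
  have key := key_ineq lam1 lam2 (ρ₁ s a) (ρ₂ s a) (∑ a', ρ₁ s a') (∑ a', ρ₂ s a')
    hl1 hl2 hx1 hx2 hxy1 hxy2
  have e1 : ∀ x y : ℝ, x * (1 - x / y) = x - x ^ 2 / y := by intro x y; ring
  rw [e1, e1, e1]
  have esum : ∑ a', (lam1 * ρ₁ s a' + lam2 * ρ₂ s a')
      = lam1 * ∑ a', ρ₁ s a' + lam2 * ∑ a', ρ₂ s a' := by
    rw [Finset.sum_add_distrib, Finset.mul_sum, Finset.mul_sum]
  rw [esum]
  nlinarith [key]
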